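/- Let (H_X, H_Z) be a CSS code that has at least one X logical operator, with X distance d_X, and let q ≥ 2. Let H'_X, H'_Z be the check matrices of the copied code. Then the copied code has at least one X logical operator, and its X distance equals d_X: the minimum Hamming weight over ker(H'_Z) \ rowspan(H'_X) equals the minimum Hamming weight over ker(H_Z) \ rowspan(H_X). -/

import Mathlib

open Matrix

/-- The `F₂`-span of the rows of a matrix. -/
noncomputable def rowSpan {ι κ : Type*} [Fintype ι] [Fintype κ] (M : Matrix ι κ (ZMod 2)) :
    Submodule (ZMod 2) (κ → ZMod 2) :=
  Submodule.span (ZMod 2) (Set.range fun i => M i)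

/-- The kernel `{v : M v = 0}` of a matrix, as a submodule. -/
noncomputable def kerMat {ι κ : Type*} [Fintype ι] [Fintype κ] (M : Matrix ι κ (ZMod 2)) :
    Submodule (ZMod 2) (κ → ZMod 2) :=
  LinearMap.ker M.mulVecLin

/-- The logical operators `ker(Hker) \ rowspan(Hspan)`. -/
def logicalSet {ι₁ ι₂ κ : Type*} [Fintype ι₁] [Fintype ι₂] [Fintype κ]
    (Hker : Matrix ι₁ κ (ZMod 2)) (Hspan : Matrix ι₂ κ (ZMod 2)) : Set (κ → ZMod 2) :=
  {v | Hker.mulVec v = 0 ∧ v ∉ rowSpan Hspan}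

/-- Minimum Hamming weight over a set of vectors. -/
noncomputable def minWt {ι : Type*} [Fintype ι] (S : Set (ι → ZMod 2)) : ℕ :=
  sInf (hammingNorm '' S)

/-- Parity check matrix of the `[q,1,q]` repetition code: row `j` is `e_j + e_{j+1}`. -/
def repCheck (q : ℕ) : Matrix (Fin (q - 1)) (Fin q) (ZMod 2) :=
  Matrix.of fun j c => if c.val = j.val ∨ c.val = j.val + 1 then 1 else 0

/-- `I_n ⊗ H_R` acting on `F₂^n ⊗ F₂^q`. -/
def idKronRep (n q : ℕ) : Matrix (Fin n × Fin (q - 1)) (Fin n × Fin q) (ZMod 2) :=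
  Matrix.of fun b p => if p.1 = b.1 then repCheck q b.2 p.2 else 0

/-- `H_X ⊗ ê₁ᵀ` where `ê₁ = (1,0,…,0) ∈ F₂^q`. -/
def kronE1 {nX n : ℕ} (q : ℕ) (HX : Matrix (Fin nX) (Fin n) (ZMod 2)) :
    Matrix (Fin nX) (Fin n × Fin q) (ZMod 2) :=
  Matrix.of fun a p => if p.2.val = 0 then HX a p.1 else 0

/-- X check matrix of the copied code: `H_X ⊗ ê₁ᵀ` stacked on top of `I_n ⊗ H_R`. -/
def copyX {nX n : ℕ} (q : ℕ) (HX : Matrix (Fin nX) (Fin n) (ZMod 2)) :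
    Matrix (Fin nX ⊕ (Fin n × Fin (q - 1))) (Fin n × Fin q) (ZMod 2) :=
  Matrix.of fun s p =>
    match s with
    | Sum.inl a => kronE1 q HX a p
    | Sum.inr b => idKronRep n q b p

/-- Z check matrix of the copied code: `H_Z ⊗ 1_qᵀ`. -/
def copyZ {nZ n : ℕ} (q : ℕ) (HZ : Matrix (Fin nZ) (Fin n) (ZMod 2)) :
    Matrix (Fin nZ) (Fin n × Fin q) (ZMod 2) :=
  Matrix.of fun s p => HZ s p.1


section Aux
open Finset

lemma mem_span_rows_iff {ι κ : Type*} [Fintype ι] [Fintype κ] (M : Matrix ι κ (ZMod 2))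
    (v : κ → ZMod 2) :
    v ∈ Submodule.span (ZMod 2) (Set.range fun i => M i) ↔ ∃ c, c ᵥ* M = v := by
  rw [show (Set.range fun i => M i) = Set.range M.row from rfl, ← range_vecMulLinear]
  simp [LinearMap.mem_range]

lemma sum_ite_val {N : ℕ} (f : Fin N → ZMod 2) (t : ℕ) :
    (∑ j : Fin N, if t = j.val then f j else 0) = if ht : t < N then f ⟨t, ht⟩ else 0 := by
  split_ifs with ht
  · rw [Finset.sum_eq_single (⟨t, ht⟩ : Fin N)]
    · simp
    · intro b _ hb
      rw [if_neg]
      intro h; exact hb (Fin.ext h.symm)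
    · simp
  · apply Finset.sum_eq_zero
    intro j _
    rw [if_neg]; omega

lemma two_torsion (a : ZMod 2) : a + a = 0 := by fin_cases a <;> decide

/-- prefix sums -/
def pref {q : ℕ} (w : Fin q → ZMod 2) (t : ℕ) : ZMod 2 :=
  ∑ k : Fin q, if k.val ≤ t then w k else 0

lemma pref_succ {q : ℕ} (w : Fin q → ZMod 2) (t : ℕ) (ht : t + 1 < q) :
    pref w (t + 1) = pref w t + w ⟨t + 1, ht⟩ := by
  unfold pref
  have : ∀ k : Fin q, (if k.val ≤ t + 1 then w k else 0) =
      (if k.val ≤ t then w k else 0) + (if t + 1 = k.val then w k else 0) := by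
    intro k
    by_cases h1 : k.val ≤ t
    · rw [if_pos (by omega), if_pos h1, if_neg (by omega), add_zero]
    · by_cases h2 : k.val = t + 1
      · rw [if_pos (by omega), if_neg h1, if_pos (by omega), zero_add]
      · rw [if_neg (by omega), if_neg h1, if_neg (by omega), add_zero]
  rw [Finset.sum_congr rfl (fun k _ => this k), Finset.sum_add_distrib, sum_ite_val, dif_pos ht]

lemma pref_zero {q : ℕ} (w : Fin q → ZMod 2) (hq : 0 < q) :
    pref w 0 = w ⟨0, hq⟩ := by
  unfold pref
  have : ∀ k : Fin q, (if k.val ≤ 0 then w k else 0) = (if (0:ℕ) = k.val then w k else 0) := by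
    intro k
    by_cases h : k.val = 0
    · rw [if_pos (by omega), if_pos h.symm]
    · rw [if_neg (by omega), if_neg (by omega)]
  rw [Finset.sum_congr rfl (fun k _ => this k), sum_ite_val, dif_pos hq]

lemma pref_top {q : ℕ} (w : Fin q → ZMod 2) :
    pref w (q - 1) = ∑ k, w k := by
  unfold pref
  apply Finset.sum_congr rfl
  intro k _; rw [if_pos (by omega)]


lemma row_comb {q : ℕ} (hq : 2 ≤ q) (w : Fin q → ZMod 2) (hw : ∑ k, w k = 0) (m : Fin q) :
    (∑ j : Fin (q - 1), pref w j.val * repCheck q j m) = w m := by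
  have hrep : ∀ j : Fin (q-1), repCheck q j m =
      (if (m.val : ℕ) = j.val then (1:ZMod 2) else 0) +
      (if m.val = j.val + 1 then (1:ZMod 2) else 0) := by
    intro j
    show (if m.val = j.val ∨ m.val = j.val + 1 then (1:ZMod 2) else 0) = _
    by_cases h1 : m.val = j.val
    · rw [if_pos (Or.inl h1), if_pos h1, if_neg (by omega), add_zero]
    · by_cases h2 : m.val = j.val + 1
      · rw [if_pos (Or.inr h2), if_neg h1, if_pos h2, zero_add]
      · rw [if_neg (by tauto), if_neg h1, if_neg h2, add_zero]
  simp_rw [hrep, mul_add, Finset.sum_add_distrib, mul_ite, mul_one, mul_zero]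
  rw [sum_ite_val (fun j => pref w j.val) m.val]
  have h2 : (∑ j : Fin (q-1), if m.val = j.val + 1 then pref w j.val else 0) =
      if hm : 1 ≤ m.val then (if h : m.val - 1 < q - 1 then pref w (m.val - 1) else 0) else 0 := by
    split_ifs with hm hlt
    · have hv := sum_ite_val (N := q - 1) (fun j => pref w j.val) (m.val - 1)
      rw [dif_pos hlt] at hv
      rw [← hv]
      apply Finset.sum_congr rfl
      intro j _
      congr 1
      simp only [eq_iff_iff]; omega
    · apply Finset.sum_eq_zero; intro j _; rw [if_neg (by omega)]
    · apply Finset.sum_eq_zero; intro j _; rw [if_neg (by omega)]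
  rw [h2]
  -- case analysis on m.val
  rcases Nat.eq_zero_or_pos m.val with h0 | h1
  · rw [dif_pos (by omega), dif_neg (by omega), add_zero, h0, pref_zero w (by omega)]
    congr 1; exact Fin.ext h0.symm
  · rw [dif_pos (show 1 ≤ m.val from h1)]
    rcases Nat.lt_or_ge m.val (q - 1) with hlt | hge
    · rw [dif_pos hlt, dif_pos (by omega)]
      obtain ⟨t, ht⟩ : ∃ t, m.val = t + 1 := ⟨m.val - 1, by omega⟩
      have hstep := pref_succ w t (by omega : t + 1 < q)
      rw [show m.val - 1 = t by omega, ht, hstep]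
      have : w ⟨t + 1, by omega⟩ = w m := by congr 1; exact Fin.ext ht.symm
      rw [this]
      rw [add_comm (pref w t) (w m), add_assoc, two_torsion, add_zero]
    · have hm : m.val = q - 1 := by omega
      rw [dif_neg (by omega), dif_pos (by omega), zero_add]
      have hstep := pref_succ w (q - 2) (by omega : q - 2 + 1 < q)
      have hstep' : pref w (q - 1) = pref w (q - 2) + w m := by
        rw [show q - 1 = q - 2 + 1 by omega, hstep]
        exact congrArg (fun z => pref w (q - 2) + z) (congrArg w (Fin.ext (show q - 2 + 1 = m.val by omega)))
      rw [pref_top, hw] at hstep'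
      have hfin := congrArg (· + w m) hstep'
      simp only [zero_add, add_assoc, two_torsion, add_zero] at hfin
      rw [show m.val - 1 = q - 2 by omega, ← hfin]

def projV (n q : ℕ) (V : Fin n × Fin q → ZMod 2) : Fin n → ZMod 2 :=
  fun i => ∑ j : Fin q, V (i, j)

def embV (n q : ℕ) (x : Fin n → ZMod 2) : Fin n × Fin q → ZMod 2 :=
  fun p => if p.2.val = 0 then x p.1 else 0

lemma mem_rowSpan_iff {ι κ : Type*} [Fintype ι] [Fintype κ] (M : Matrix ι κ (ZMod 2))
    (v : κ → ZMod 2) : v ∈ rowSpan M ↔ ∃ c, c ᵥ* M = v := by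
  unfold rowSpan; exact mem_span_rows_iff M v

lemma copyZ_mulVec {nZ n q : ℕ} (HZ : Matrix (Fin nZ) (Fin n) (ZMod 2))
    (V : Fin n × Fin q → ZMod 2) :
    (copyZ q HZ).mulVec V = HZ.mulVec (projV n q V) := by
  ext s
  show ∑ p : Fin n × Fin q, HZ s p.1 * V p = ∑ i, HZ s i * ∑ j, V (i, j)
  rw [Fintype.sum_prod_type]
  exact Finset.sum_congr rfl fun i _ => by rw [Finset.mul_sum]

lemma sum_ite_zero_col {q : ℕ} (hq : 0 < q) (c : ZMod 2) :
    (∑ j : Fin q, if (j : Fin q).val = 0 then c else 0) = c := by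
  have hcond : ∀ j : Fin q, (if (j : Fin q).val = 0 then c else 0) =
      (if 0 = (j : Fin q).val then c else 0) := by
    intro j
    by_cases hj : j.val = 0
    · rw [if_pos hj, if_pos hj.symm]
    · rw [if_neg hj, if_neg (fun hh => hj hh.symm)]
  rw [Finset.sum_congr rfl fun j _ => hcond j, sum_ite_val (fun _ => c) 0, dif_pos hq]

lemma projV_embV {n q : ℕ} (hq : 0 < q) (x : Fin n → ZMod 2) :
    projV n q (embV n q x) = x := by
  ext i
  show (∑ j : Fin q, if (j : Fin q).val = 0 then x i else 0) = x i
  exact sum_ite_zero_col hq (x i)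

lemma repCheck_rowsum {q : ℕ} (hq : 2 ≤ q) (b : Fin (q - 1)) :
    (∑ j : Fin q, repCheck q b j) = 0 := by
  have hsplit : ∀ j : Fin q, repCheck q b j =
      (if b.val = j.val then (1:ZMod 2) else 0) + (if b.val + 1 = j.val then (1:ZMod 2) else 0) := by
    intro j
    show (if j.val = b.val ∨ j.val = b.val + 1 then (1:ZMod 2) else 0) = _
    by_cases h1 : j.val = b.val
    · rw [if_pos (Or.inl h1), if_pos h1.symm, if_neg (by omega), add_zero]
    · by_cases h2 : j.val = b.val + 1
      · rw [if_pos (Or.inr h2), if_neg (fun hh => h1 hh.symm), if_pos h2.symm, zero_add]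
      · rw [if_neg (by tauto), if_neg (fun hh => h1 hh.symm), if_neg (fun hh => h2 hh.symm),
          add_zero]
  rw [Finset.sum_congr rfl fun j _ => hsplit j, Finset.sum_add_distrib,
    sum_ite_val (fun _ => (1:ZMod 2)) b.val, sum_ite_val (fun _ => (1:ZMod 2)) (b.val + 1),
    dif_pos (by omega : b.val < q), dif_pos (by omega : b.val + 1 < q)]
  decide

lemma copyX_rowsum {nX n q : ℕ} (hq : 2 ≤ q) (HX : Matrix (Fin nX) (Fin n) (ZMod 2))
    (s : Fin nX ⊕ (Fin n × Fin (q - 1))) (i : Fin n) :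
    (∑ j : Fin q, copyX q HX s (i, j)) = Sum.elim (fun a => HX a i) (fun _ => 0) s := by
  rcases s with a | b
  · show (∑ j : Fin q, if (j : Fin q).val = 0 then HX a i else 0) = HX a i
    exact sum_ite_zero_col (by omega) (HX a i)
  · show (∑ j : Fin q, if i = b.1 then repCheck q b.2 j else 0) = 0
    by_cases h : i = b.1
    · simp only [h, if_true]
      exact repCheck_rowsum hq b.2
    · simp [h]

lemma mem_rowSpan_copyX {nX n q : ℕ} (hq : 2 ≤ q) (HX : Matrix (Fin nX) (Fin n) (ZMod 2))
    (V : Fin n × Fin q → ZMod 2) :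
    V ∈ rowSpan (copyX q HX) ↔ projV n q V ∈ rowSpan HX := by
  rw [mem_rowSpan_iff, mem_rowSpan_iff]
  constructor
  · rintro ⟨c, rfl⟩
    refine ⟨fun a => c (Sum.inl a), ?_⟩
    ext i
    show (∑ a, c (Sum.inl a) * HX a i) = ∑ j : Fin q, ∑ s, c s * copyX q HX s (i, j)
    rw [Finset.sum_comm]
    simp_rw [← Finset.mul_sum, copyX_rowsum hq HX]
    rw [Fintype.sum_sum_type]
    simp
  · rintro ⟨d, hd⟩
    classical
    set W : Fin n × Fin q → ZMod 2 := fun p => V p + embV n q (projV n q V) p with hWdef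
    have hWrow : ∀ i, (∑ k : Fin q, W (i, k)) = 0 := by
      intro i
      show (∑ k : Fin q, (V (i,k) + embV n q (projV n q V) (i,k))) = 0
      rw [Finset.sum_add_distrib]
      have h1 : (∑ k : Fin q, embV n q (projV n q V) (i,k)) = projV n q V i :=
        congr_fun (projV_embV (by omega) (projV n q V)) i
      rw [h1]
      exact two_torsion _
    refine ⟨Sum.elim d (fun b => pref (fun k => W (b.1, k)) b.2.val), ?_⟩
    ext p
    obtain ⟨i, m⟩ := p
    show (∑ s, Sum.elim d (fun b => pref (fun k => W (b.1, k)) b.2.val) s *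
      copyX q HX s (i, m)) = V (i, m)
    rw [Fintype.sum_sum_type]
    simp only [Sum.elim_inl, Sum.elim_inr]
    have hinl : (∑ a, d a * copyX q HX (Sum.inl a) (i, m)) = embV n q (projV n q V) (i, m) := by
      show (∑ a, d a * if m.val = 0 then HX a i else 0) =
        if m.val = 0 then projV n q V i else 0
      by_cases h : m.val = 0
      · simp only [h, if_true]
        exact congr_fun hd i
      · simp [h]
    have hinr : (∑ b : Fin n × Fin (q - 1),
        pref (fun k => W (b.1, k)) b.2.val * copyX q HX (Sum.inr b) (i, m)) = W (i, m) := by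
      rw [Fintype.sum_prod_type]
      have hrow : ∀ i' : Fin n, (∑ j : Fin (q - 1),
          pref (fun k => W (i', k)) j.val * copyX q HX (Sum.inr (i', j)) (i, m)) =
          if i = i' then W (i, m) else 0 := by
        intro i'
        show (∑ j : Fin (q - 1), pref (fun k => W (i', k)) j.val *
          (if i = i' then repCheck q j m else 0)) = _
        by_cases h : i = i'
        · simp only [h, if_true]
          subst h
          exact row_comb hq (fun k => W (i, k)) (hWrow i) m
        · simp [h]
      rw [Finset.sum_congr rfl fun i' _ => hrow i']
      simp
    rw [hinl, hinr, hWdef]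
    show embV n q (projV n q V) (i, m) + (V (i, m) + embV n q (projV n q V) (i, m)) = V (i, m)
    rw [add_comm (V (i, m)), ← add_assoc, two_torsion, zero_add]

lemma mem_logical_copy_iff {nX nZ n q : ℕ} (hq : 2 ≤ q)
    (HX : Matrix (Fin nX) (Fin n) (ZMod 2)) (HZ : Matrix (Fin nZ) (Fin n) (ZMod 2))
    (V : Fin n × Fin q → ZMod 2) :
    V ∈ logicalSet (copyZ q HZ) (copyX q HX) ↔ projV n q V ∈ logicalSet HZ HX := by
  unfold logicalSet
  simp only [Set.mem_setOf_eq]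
  rw [copyZ_mulVec]
  exact and_congr Iff.rfl (not_congr (mem_rowSpan_copyX hq HX V))

lemma hammingNorm_embV {n q : ℕ} (hq : 0 < q) (x : Fin n → ZMod 2) :
    hammingNorm (embV n q x) = hammingNorm x := by
  unfold hammingNorm
  apply Finset.card_bij (fun p _ => p.1)
  · intro p hp
    simp only [Finset.mem_filter, Finset.mem_univ, true_and] at hp ⊢
    intro hx
    apply hp
    show (if p.2.val = 0 then x p.1 else 0) = 0
    split_ifs with h
    · exact hx
    · rfl
  · intro p hp p' hp' hpp
    simp only [Finset.mem_filter, Finset.mem_univ, true_and, embV] at hp hp'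
    have h2 : p.2.val = 0 := by
      by_contra h; simp [h] at hp
    have h2' : p'.2.val = 0 := by
      by_contra h; simp [h] at hp'
    exact Prod.ext hpp (Fin.ext (h2.trans h2'.symm))
  · intro i hi
    simp only [Finset.mem_filter, Finset.mem_univ, true_and] at hi
    refine ⟨(i, ⟨0, hq⟩), ?_, rfl⟩
    simp only [Finset.mem_filter, Finset.mem_univ, true_and, embV]
    simpa using hi

lemma hammingNorm_projV_le {n q : ℕ} (hq : 0 < q) (V : Fin n × Fin q → ZMod 2) :
    hammingNorm (projV n q V) ≤ hammingNorm V := by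
  classical
  unfold hammingNorm
  apply Finset.card_le_card_of_injOn
    (fun i => (i, if h : ∃ j, V (i, j) ≠ 0 then h.choose else ⟨0, hq⟩))
  · intro i hi
    simp only [Finset.coe_filter, Set.mem_setOf_eq, Finset.mem_filter, Finset.mem_univ, true_and] at hi ⊢
    have hex : ∃ j, V (i, j) ≠ 0 := by
      by_contra hc
      push_neg at hc
      exact hi (Finset.sum_eq_zero fun j _ => hc j)
    rw [dif_pos hex]
    exact hex.choose_spec
  · intro a _ b _ hab
    exact congrArg Prod.fst hab

end Aux
/-- **Copying preserves the X distance.** -/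
theorem copying_X_distance {nX nZ n q : ℕ} (hq : 2 ≤ q)
    (HX : Matrix (Fin nX) (Fin n) (ZMod 2)) (HZ : Matrix (Fin nZ) (Fin n) (ZMod 2))
    (hcss : HX * HZ.transpose = 0)
    (hlog : (logicalSet HZ HX).Nonempty) :
    (logicalSet (copyZ q HZ) (copyX q HX)).Nonempty ∧
      minWt (logicalSet (copyZ q HZ) (copyX q HX)) = minWt (logicalSet HZ HX) := by
  have hq0 : 0 < q := by omega
  obtain ⟨v, hv⟩ := hlog
  have hvemb : embV n q v ∈ logicalSet (copyZ q HZ) (copyX q HX) := by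
    rw [mem_logical_copy_iff hq, projV_embV hq0]
    exact hv
  refine ⟨⟨embV n q v, hvemb⟩, ?_⟩
  have hne : (hammingNorm '' logicalSet HZ HX).Nonempty := ⟨_, Set.mem_image_of_mem _ hv⟩
  have hne' : (hammingNorm '' logicalSet (copyZ q HZ) (copyX q HX)).Nonempty :=
    ⟨_, Set.mem_image_of_mem _ hvemb⟩
  apply le_antisymm
  · obtain ⟨u, hu, hnu⟩ := Nat.sInf_mem hne
    apply Nat.sInf_le
    refine ⟨embV n q u, ?_, ?_⟩
    · rw [mem_logical_copy_iff hq, projV_embV hq0]; exact hu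
    · rw [hammingNorm_embV hq0]; exact hnu
  · obtain ⟨U, hU, hnU⟩ := Nat.sInf_mem hne'
    calc minWt (logicalSet HZ HX) ≤ hammingNorm (projV n q U) :=
          Nat.sInf_le ⟨projV n q U, (mem_logical_copy_iff hq HX HZ U).mp hU, rfl⟩
      _ ≤ hammingNorm U := hammingNorm_projV_le hq0 U
      _ = minWt (logicalSet (copyZ q HZ) (copyX q HX)) := hnU
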